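/- arXiv:1510.01123 — 2 statements merged into one kernel-verified Lean document; each statement's English description precedes it below -/
import Mathlib

section
/- Let γ ∈ (0,1] and define b(x) = -2|x|^γ x and σ(x) = |x|^{1+γ/2}(I₃ - xx*/|x|²) (vanishing at 0). Then for all X, Y ∈ ℝ³, the quantity Δ₂ = (X-Y)·(b(X)-b(Y)) + ‖σ(X)-σ(Y)‖² satisfies Δ₂ ≤ 2(X·Y)(|X|^{γ/2} - |Y|^{γ/2})² ≤ 2(|X| ∧ |Y|)^γ |X-Y|². For γ = 0 one has Δ₂ ≤ 0. -/
noncomputable section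
open Matrix
open scoped Classical

abbrev E3 := EuclideanSpace ℝ (Fin 3)
abbrev M3 := Matrix (Fin 3) (Fin 3) ℝ

def proj3 (x : E3) : M3 :=
  1 - (‖x‖ ^ 2)⁻¹ • Matrix.vecMulVec (fun i => x i) (fun i => x i)

def sigmat (γ : ℝ) (v : E3) : M3 := if v = 0 then 0 else (‖v‖ ^ (1 + γ / 2)) • proj3 v

def bvec (γ : ℝ) (v : E3) : E3 := (-2 * ‖v‖ ^ γ) • v

def frobSq (A : M3) : ℝ := Matrix.trace (A * Aᵀ)

/-- `Δ₂ = (X-Y)·(b(X)-b(Y)) + ‖σ(X)-σ(Y)‖²`. -/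
def Delta2 (γ : ℝ) (X Y : E3) : ℝ :=
  (inner ℝ (X - Y) (bvec γ X - bvec γ Y) : ℝ) + frobSq (sigmat γ X - sigmat γ Y)

lemma vmv_mul (x y z w : Fin 3 → ℝ) :
    vecMulVec x y * vecMulVec z w = (∑ i, y i * z i) • vecMulVec x w := by
  ext i j
  simp only [Matrix.mul_apply, Matrix.vecMulVec_apply, Matrix.smul_apply, smul_eq_mul]
  rw [Finset.sum_mul]
  exact Finset.sum_congr rfl fun k _ => by ring

lemma trace_vmv (x y : Fin 3 → ℝ) : Matrix.trace (vecMulVec x y) = ∑ i, x i * y i := by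
  simp [Matrix.trace, Matrix.diag, Matrix.vecMulVec_apply]

lemma innerE3_sum (x y : E3) : (inner ℝ x y : ℝ) = ∑ i, x i * y i := by
  simp [PiLp.inner_apply, mul_comm]

lemma proj3_transpose (x : E3) : (proj3 x)ᵀ = proj3 x := by
  unfold proj3
  rw [Matrix.transpose_sub, Matrix.transpose_smul, Matrix.transpose_one]
  congr 1
  ext i j
  simp [Matrix.vecMulVec_apply, mul_comm]

lemma trace_projmul (x y : E3) (hx : x ≠ 0) (hy : y ≠ 0) :
    Matrix.trace (proj3 x * proj3 y) = 1 + (inner ℝ x y : ℝ)^2 / (‖x‖^2 * ‖y‖^2) := by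
  have hx2 : (‖x‖:ℝ)^2 ≠ 0 := by
    have := norm_ne_zero_iff.mpr hx; positivity
  have hy2 : (‖y‖:ℝ)^2 ≠ 0 := by
    have := norm_ne_zero_iff.mpr hy; positivity
  have hxx : ∑ i, x i * x i = (‖x‖:ℝ)^2 := by
    rw [← real_inner_self_eq_norm_sq, innerE3_sum]
  have hyy : ∑ i, y i * y i = (‖y‖:ℝ)^2 := by
    rw [← real_inner_self_eq_norm_sq, innerE3_sum]
  have hxy : ∑ i, x i * y i = (inner ℝ x y : ℝ) := (innerE3_sum x y).symm
  unfold proj3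
  simp only [sub_mul, mul_sub, one_mul, mul_one, Matrix.smul_mul, Matrix.mul_smul,
    vmv_mul, smul_smul, Matrix.trace_sub, Matrix.trace_smul, Matrix.trace_one, trace_vmv]
  simp only [smul_eq_mul, hxx, hyy, hxy]
  have : (Fintype.card (Fin 3) : ℝ) = 3 := by simp
  rw [this]
  field_simp
  ring

lemma frob_eq (c d : ℝ) (x y : E3) (hx : x ≠ 0) (hy : y ≠ 0) :
    frobSq (c • proj3 x - d • proj3 y) =
      2*c^2 + 2*d^2 - 2*c*d*(1 + (inner ℝ x y : ℝ)^2/(‖x‖^2*‖y‖^2)) := by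
  unfold frobSq
  rw [Matrix.transpose_sub, Matrix.transpose_smul, Matrix.transpose_smul,
    proj3_transpose, proj3_transpose]
  simp only [sub_mul, mul_sub, Matrix.smul_mul, Matrix.mul_smul, smul_smul,
    Matrix.trace_sub, Matrix.trace_smul, smul_eq_mul]
  rw [trace_projmul x x hx hx, trace_projmul y y hy hy, trace_projmul x y hx hy,
    Matrix.trace_mul_comm (proj3 y) (proj3 x), trace_projmul x y hx hy]
  have hxx : ((inner ℝ x x : ℝ))^2 / (‖x‖^2*‖x‖^2) = 1 := by
    rw [real_inner_self_eq_norm_sq]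
    have := norm_ne_zero_iff.mpr hx
    field_simp
  have hyy : ((inner ℝ y y : ℝ))^2 / (‖y‖^2*‖y‖^2) = 1 := by
    rw [real_inner_self_eq_norm_sq]
    have := norm_ne_zero_iff.mpr hy
    field_simp
  rw [hxx, hyy]
  ring

lemma frobSq_zero : frobSq 0 = 0 := by simp [frobSq]

/-- Main upper bound, valid for every real `γ` (degenerate cases give equality `0 ≤ 0`). -/
lemma main_le (γ : ℝ) (X Y : E3) :
    Delta2 γ X Y ≤ 2 * (inner ℝ X Y : ℝ) * (‖X‖ ^ (γ / 2) - ‖Y‖ ^ (γ / 2)) ^ 2 := by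
  by_cases hX : X = 0
  · subst hX
    by_cases hY : Y = 0
    · subst hY
      simp [Delta2, bvec, sigmat, frobSq_zero]
    · have hb : (0:ℝ) < ‖Y‖ := norm_pos_iff.mpr hY
      have h1 : Delta2 γ 0 Y = -(2 * ‖Y‖^γ * ‖Y‖^2) + 2 * (‖Y‖^(1+γ/2))^2 := by
        unfold Delta2
        rw [show sigmat γ (0:E3) - sigmat γ Y
            = (0:ℝ) • proj3 Y - (‖Y‖ ^ (1 + γ / 2)) • proj3 Y by
          simp [sigmat, if_pos, if_neg hY]]
        rw [frob_eq 0 (‖Y‖ ^ (1 + γ / 2)) Y Y hY hY]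
        simp only [bvec, norm_zero, smul_zero, zero_sub, inner_neg_neg,
          inner_neg_left, inner_neg_right, neg_neg, real_inner_smul_right,
          real_inner_self_eq_norm_sq]
        ring
      have h2 : (‖Y‖^(1+γ/2))^2 = ‖Y‖^γ * ‖Y‖^2 := by
        rw [← Real.rpow_natCast (‖Y‖^(1+γ/2)) 2, ← Real.rpow_mul hb.le,
          ← Real.rpow_natCast ‖Y‖ 2, ← Real.rpow_add hb]
        norm_num
        congr 1
        ring
      have hz : Delta2 γ 0 Y = 0 := by rw [h1, h2]; ring
      rw [hz, inner_zero_left]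
      norm_num
  · by_cases hY : Y = 0
    · have ha : (0:ℝ) < ‖X‖ := norm_pos_iff.mpr hX
      subst hY
      have h1 : Delta2 γ X 0 = -(2 * ‖X‖^γ * ‖X‖^2) + 2 * (‖X‖^(1+γ/2))^2 := by
        unfold Delta2
        rw [show sigmat γ X - sigmat γ (0:E3)
            = (‖X‖ ^ (1 + γ / 2)) • proj3 X - (0:ℝ) • proj3 X by
          simp [sigmat, if_pos, if_neg hX]]
        rw [frob_eq (‖X‖ ^ (1 + γ / 2)) 0 X X hX hX]
        simp only [bvec, norm_zero, smul_zero, sub_zero, real_inner_smul_right,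
          real_inner_self_eq_norm_sq]
        ring
      have h2 : (‖X‖^(1+γ/2))^2 = ‖X‖^γ * ‖X‖^2 := by
        rw [← Real.rpow_natCast (‖X‖^(1+γ/2)) 2, ← Real.rpow_mul ha.le,
          ← Real.rpow_natCast ‖X‖ 2, ← Real.rpow_add ha]
        norm_num
        congr 1
        ring
      have hz : Delta2 γ X 0 = 0 := by rw [h1, h2]; ring
      rw [hz, inner_zero_right]
      norm_num
    · -- main case
      have ha : (0:ℝ) < ‖X‖ := norm_pos_iff.mpr hX
      have hb : (0:ℝ) < ‖Y‖ := norm_pos_iff.mpr hY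
      set a := ‖X‖ with ha'
      set b := ‖Y‖ with hb'
      set s : ℝ := (inner ℝ X Y : ℝ) with hs'
      set u := a ^ (γ/2) with hu'
      set v := b ^ (γ/2) with hv'
      have hu0 : 0 ≤ u := Real.rpow_nonneg ha.le _
      have hv0 : 0 ≤ v := Real.rpow_nonneg hb.le _
      have hua : a ^ γ = u^2 := by
        rw [hu', ← Real.rpow_natCast (a^(γ/2)) 2, ← Real.rpow_mul ha.le]
        norm_num
      have hvb : b ^ γ = v^2 := by
        rw [hv', ← Real.rpow_natCast (b^(γ/2)) 2, ← Real.rpow_mul hb.le]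
        norm_num
      have hau : a ^ (1+γ/2) = a * u := by
        rw [hu', Real.rpow_add ha, Real.rpow_one]
      have hbv : b ^ (1+γ/2) = b * v := by
        rw [hv', Real.rpow_add hb, Real.rpow_one]
      have hΔ : Delta2 γ X Y =
          (-2*(a^γ)*a^2 - 2*(b^γ)*b^2 + 2*s*(a^γ + b^γ))
          + (2*(a^(1+γ/2))^2 + 2*(b^(1+γ/2))^2
             - 2*(a^(1+γ/2))*(b^(1+γ/2))*(1 + s^2/(a^2*b^2))) := by
        unfold Delta2
        rw [show sigmat γ X - sigmat γ Y
            = (a ^ (1 + γ / 2)) • proj3 X - (b ^ (1 + γ / 2)) • proj3 Y by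
          simp [sigmat, if_neg hX, if_neg hY]; rfl]
        rw [frob_eq _ _ X Y hX hY]
        have hin : (inner ℝ (X - Y) (bvec γ X - bvec γ Y) : ℝ)
            = -2*(a^γ)*a^2 - 2*(b^γ)*b^2 + 2*s*(a^γ + b^γ) := by
          simp only [bvec, inner_sub_left, inner_sub_right, real_inner_smul_right,
            real_inner_self_eq_norm_sq, ← ha', ← hb', ← hs']
          rw [real_inner_comm X Y, ← hs']
          ring
        rw [hin]
      have key : 2*s*(u - v)^2 - Delta2 γ X Y = 2*u*v*(a*b - s)^2/(a*b) := by
        rw [hΔ, hua, hvb, hau, hbv]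
        field_simp
        ring
      have hpos : 0 ≤ 2*u*v*(a*b - s)^2/(a*b) := by
        apply div_nonneg _ (by positivity)
        positivity
      linarith [key, hpos]

/-- purely real second inequality -/
lemma real_ineq2 (γ a b s : ℝ) (hγ0 : 0 < γ) (hγ1 : γ ≤ 1) (ha : 0 ≤ a) (hb : 0 ≤ b)
    (hs : s ≤ a * b) :
    2*s*(a^(γ/2) - b^(γ/2))^2 ≤ 2*(min a b)^γ*(a^2 - 2*s + b^2) := by
  have hm0 : (0:ℝ) ≤ min a b := le_min ha hb
  have hmγ : 0 ≤ (min a b)^γ := Real.rpow_nonneg hm0 _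
  rcases le_or_gt s 0 with hneg | hpos
  · have h2 : 0 ≤ a^2 - 2*s + b^2 := by nlinarith [sq_nonneg a, sq_nonneg b]
    have h3 := mul_nonneg hmγ h2
    nlinarith [sq_nonneg (a^(γ/2) - b^(γ/2))]
  · have hab0 : 0 < a * b := lt_of_lt_of_le hpos hs
    have ha' : 0 < a := by
      rcases ha.lt_or_eq with h | h
      · exact h
      · exfalso; rw [← h] at hab0; simp at hab0
    have hb' : 0 < b := by
      rcases hb.lt_or_eq with h | h
      · exact h
      · exfalso; rw [← h] at hab0; simp at hab0
    -- key : for 0 < q ≤ p :  p*q*(p^(γ/2)-q^(γ/2))^2 ≤ q^γ*(p-q)^2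
    have key : ∀ p q : ℝ, 0 < q → q ≤ p → p*q*(p^(γ/2)-q^(γ/2))^2 ≤ q^γ*(p-q)^2 := by
      intro p q hq hqp
      have hp : 0 < p := lt_of_lt_of_le hq hqp
      have huv : q^(γ/2) ≤ p^(γ/2) := Real.rpow_le_rpow hq.le hqp (by positivity)
      have e1 : p^(1-γ/2) * (p^(γ/2) - q^(γ/2)) ≤ p - q := by
        have m1 : p^(1-γ/2) * p^(γ/2) = p := by
          rw [← Real.rpow_add hp]; norm_num
        have m2 : q ≤ p^(1-γ/2) * q^(γ/2) := by
          have l1 : q^(1-γ/2) ≤ p^(1-γ/2) :=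
            Real.rpow_le_rpow hq.le hqp (by linarith)
          have l2 : q^(1-γ/2) * q^(γ/2) = q := by
            rw [← Real.rpow_add hq]; norm_num
          nlinarith [Real.rpow_nonneg hq.le (γ/2)]
        nlinarith
      have e1l : 0 ≤ p^(1-γ/2) * (p^(γ/2) - q^(γ/2)) := by
        have := Real.rpow_nonneg hp.le (1-γ/2)
        nlinarith
      have e3 : (p^(1-γ/2))^2 * (p^(γ/2) - q^(γ/2))^2 ≤ (p-q)^2 := by
        rw [← mul_pow]
        exact pow_le_pow_left₀ e1l e1 2
      have e4 : (p^(1-γ/2))^2 = p^(2-γ) := by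
        rw [← Real.rpow_natCast (p^(1-γ/2)) 2, ← Real.rpow_mul hp.le]
        congr 1
        push_cast
        ring
      have e5 : p * q ≤ q^γ * p^(2-γ) := by
        have l1 : q^(1-γ) ≤ p^(1-γ) := Real.rpow_le_rpow hq.le hqp (by linarith)
        have l2 : q^γ * q^(1-γ) = q := by rw [← Real.rpow_add hq]; norm_num
        have l3 : p * p^(1-γ) = p^(2-γ) := by
          nth_rewrite 1 [← Real.rpow_one p]
          rw [← Real.rpow_add hp]
          congr 1
          ring
        have l4 : q^γ * (p * q^(1-γ)) ≤ q^γ * (p * p^(1-γ)) := by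
          apply mul_le_mul_of_nonneg_left _ (Real.rpow_nonneg hq.le γ)
          exact mul_le_mul_of_nonneg_left l1 hp.le
        calc p * q = q^γ * (p * q^(1-γ)) := by
              rw [show q^γ * (p * q^(1-γ)) = p * (q^γ * q^(1-γ)) by ring, l2]
          _ ≤ q^γ * (p * p^(1-γ)) := l4
          _ = q^γ * p^(2-γ) := by rw [l3]
      rw [e4] at e3
      have hqγ : 0 ≤ q^γ := Real.rpow_nonneg hq.le _
      have e6 : q^γ * (p^(2-γ) * (p^(γ/2)-q^(γ/2))^2) ≤ q^γ * (p-q)^2 :=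
        mul_le_mul_of_nonneg_left e3 hqγ
      nlinarith [mul_nonneg (sub_nonneg.mpr e5) (sq_nonneg (p^(γ/2)-q^(γ/2)))]
    rcases le_total b a with h | h
    · rw [min_eq_right h]
      have K := key a b hb' h
      nlinarith [mul_nonneg (sub_nonneg.mpr hs) (sq_nonneg (a^(γ/2)-b^(γ/2))),
        mul_nonneg (sub_nonneg.mpr hs) (Real.rpow_nonneg hb γ)]
    · rw [min_eq_left h]
      have K := key b a ha' h
      nlinarith [mul_nonneg (sub_nonneg.mpr hs) (sq_nonneg (a^(γ/2)-b^(γ/2))),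
        mul_nonneg (sub_nonneg.mpr hs) (Real.rpow_nonneg ha γ)]

theorem Delta2_bound (γ : ℝ) (X Y : E3) :
    (γ ∈ Set.Ioc (0:ℝ) 1 →
      Delta2 γ X Y ≤ 2 * (inner ℝ X Y : ℝ) * (‖X‖ ^ (γ / 2) - ‖Y‖ ^ (γ / 2)) ^ 2 ∧
      2 * (inner ℝ X Y : ℝ) * (‖X‖ ^ (γ / 2) - ‖Y‖ ^ (γ / 2)) ^ 2
        ≤ 2 * (min ‖X‖ ‖Y‖) ^ γ * ‖X - Y‖ ^ 2) ∧
    (γ = 0 → Delta2 γ X Y ≤ 0) := by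
  constructor
  · intro hγ
    refine ⟨main_le γ X Y, ?_⟩
    have h1 : ‖X - Y‖^2 = ‖X‖^2 - 2*(inner ℝ X Y : ℝ) + ‖Y‖^2 := by
      rw [norm_sub_sq_real]
    rw [h1]
    exact real_ineq2 γ ‖X‖ ‖Y‖ _ hγ.1 hγ.2 (norm_nonneg X) (norm_nonneg Y)
      (real_inner_le_norm X Y)
  · intro h0
    subst h0
    have := main_le 0 X Y
    norm_num at this
    exact this
end
end

section
/- For every pair of nonzero vectors x, y ∈ ℝ³ there exists a 3×3 real matrix A(x,y) such that: (a) A(x,y) A(x,y)* = a(y) := |y|²(I₃ - yy*/|y|²); (b) Tr(σ(x) A(x,y)*) = |x||y| + x·y, where σ(x) = |x|(I₃ - xx*/|x|²); (c) (σ(x) - A(x,y)*)(x - y) = 0. -/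
noncomputable section
open Matrix
open scoped Classical

local infix:74 " ×₃ " => crossProduct

/-- Maxwell molecules case (`γ = 0`): `a(v) = |v|² Π_{v⊥}`. -/
def amat0 (v : E3) : M3 := if v = 0 then 0 else (‖v‖ ^ 2) • proj3 v

/-- Maxwell molecules case: `σ(v) = |v| Π_{v⊥}`. -/
def sigmat0 (v : E3) : M3 := if v = 0 then 0 else ‖v‖ • proj3 v

/- ### Auxiliary lemmas -/

lemma vmv_mul_s16 (u v w z : Fin 3 → ℝ) :
    vecMulVec u v * vecMulVec w z = (v ⬝ᵥ w) • vecMulVec u z := by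
  ext a b
  simp [Matrix.mul_apply, vecMulVec_apply, dotProduct, Finset.sum_mul]
  exact Finset.sum_congr rfl fun _ _ => by ring

lemma vmv_transpose (u v : Fin 3 → ℝ) : (vecMulVec u v)ᵀ = vecMulVec v u := by
  ext a b; simp [vecMulVec_apply, mul_comm]

lemma trace_vmv_s16 (u v : Fin 3 → ℝ) : Matrix.trace (vecMulVec u v) = u ⬝ᵥ v := by
  simp [Matrix.trace, Matrix.diag, vecMulVec_apply, dotProduct]

lemma vmv_mulVec (u v w : Fin 3 → ℝ) : mulVec (vecMulVec u v) w = (v ⬝ᵥ w) • u := by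
  funext i
  simp [Matrix.mulVec, vecMulVec_apply, dotProduct, Finset.sum_mul, Finset.mul_sum]
  exact Finset.sum_congr rfl fun _ _ => by ring

lemma complete3 (e1 e2 e3 : Fin 3 → ℝ)
    (h11 : e1 ⬝ᵥ e1 = 1) (h22 : e2 ⬝ᵥ e2 = 1) (h33 : e3 ⬝ᵥ e3 = 1)
    (h12 : e1 ⬝ᵥ e2 = 0) (h13 : e1 ⬝ᵥ e3 = 0) (h23 : e2 ⬝ᵥ e3 = 0) :
    vecMulVec e1 e1 + vecMulVec e2 e2 + vecMulVec e3 e3 = (1 : M3) := by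
  simp only [dotProduct, Fin.sum_univ_three] at h11 h22 h33 h12 h13 h23
  set Q : M3 := Matrix.of ![e1, e2, e3] with hQdef
  have hQ : Q * Qᵀ = 1 := by
    ext a b
    simp only [Matrix.mul_apply, Matrix.transpose_apply, Fin.sum_univ_three]
    fin_cases a <;> fin_cases b <;>
      simp [hQdef, Matrix.one_apply] <;>
      linarith [h11, h22, h33, h12, h13, h23, mul_comm (e1 0) (e2 0)]
  have hQ' : Qᵀ * Q = 1 := mul_eq_one_comm.mp hQ
  ext a b
  have h := Matrix.ext_iff.mpr hQ' a b
  simp only [Matrix.mul_apply, Matrix.transpose_apply, Fin.sum_univ_three, hQdef] at h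
  simpa [vecMulVec_apply] using h

lemma core3 (e1 e2 e3 X Y : Fin 3 → ℝ) (nx ny : ℝ)
    (h11 : e1 ⬝ᵥ e1 = 1) (h22 : e2 ⬝ᵥ e2 = 1) (h33 : e3 ⬝ᵥ e3 = 1)
    (h12 : e1 ⬝ᵥ e2 = 0) (h13 : e1 ⬝ᵥ e3 = 0) (h23 : e2 ⬝ᵥ e3 = 0)
    (hC : vecMulVec e1 e1 + vecMulVec e2 e2 + vecMulVec e3 e3 = (1 : M3))
    (hX : X = nx • e1)
    (hY : Y = (Y ⬝ᵥ e1) • e1 + (Y ⬝ᵥ e2) • e2)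
    (hny : ny ^ 2 = Y ⬝ᵥ Y) :
    ∃ A : M3, A * Aᵀ = ny ^ 2 • (1 : M3) - vecMulVec Y Y ∧
      Matrix.trace ((nx • (1 : M3) - nx • vecMulVec e1 e1) * Aᵀ) = nx * ny + X ⬝ᵥ Y ∧
      Matrix.mulVec ((nx • (1 : M3) - nx • vecMulVec e1 e1) - Aᵀ) (X - Y) = 0 := by
  have h21 : e2 ⬝ᵥ e1 = 0 := by rwa [dotProduct_comm]
  have h31 : e3 ⬝ᵥ e1 = 0 := by rwa [dotProduct_comm]
  have h32 : e3 ⬝ᵥ e2 = 0 := by rwa [dotProduct_comm]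
  set y1 := Y ⬝ᵥ e1 with hy1
  set y2 := Y ⬝ᵥ e2 with hy2
  set u : Fin 3 → ℝ := (-y2) • e1 + y1 • e2 with hu
  have hny2 : ny ^ 2 = y1 ^ 2 + y2 ^ 2 := by
    rw [hny]
    nth_rewrite 1 [hY]; nth_rewrite 1 [hY]
    simp [add_dotProduct, dotProduct_add, smul_dotProduct, dotProduct_smul,
      h11, h22, h12, h21]
    ring
  refine ⟨vecMulVec u e2 + ny • vecMulVec e3 e3, ?_, ?_, ?_⟩
  · -- (a)
    have hue3 : e3 ⬝ᵥ u = 0 := by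
      simp [hu, dotProduct_add, dotProduct_smul, h31, h32]
    rw [transpose_add, transpose_smul, vmv_transpose, vmv_transpose]
    rw [add_mul, mul_add, mul_add, Matrix.smul_mul, Matrix.smul_mul, Matrix.mul_smul,
      Matrix.mul_smul, vmv_mul_s16, vmv_mul_s16, vmv_mul_s16, vmv_mul_s16, h22, h23, h32, h33]
    simp only [one_smul, zero_smul, smul_zero, add_zero, zero_add, smul_smul]
    rw [← hC]
    rw [hY]
    ext a b
    simp only [Matrix.add_apply, Matrix.sub_apply, Matrix.smul_apply, vecMulVec_apply,
      Pi.add_apply, Pi.smul_apply, Pi.neg_apply, smul_eq_mul, hu]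
    linear_combination (-(e1 a * e1 b + e2 a * e2 b)) * hny2
  · -- (b)
    rw [transpose_add, transpose_smul, vmv_transpose, vmv_transpose]
    rw [Matrix.sub_mul, Matrix.smul_mul, Matrix.smul_mul, one_mul, mul_add,
      Matrix.mul_smul, vmv_mul_s16, vmv_mul_s16, h12, h13]
    have hu2 : e2 ⬝ᵥ u = y1 := by
      simp [hu, dotProduct_add, dotProduct_smul, h21, h22]
    have hXY : X ⬝ᵥ Y = nx * y1 := by
      rw [hX, smul_dotProduct, dotProduct_comm, hy1]; simp [mul_comm]
    simp only [zero_smul, smul_zero, add_zero, sub_zero, trace_smul, trace_add,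
      trace_vmv_s16, smul_eq_mul, hu2, h33, hXY]
    ring
  · -- (c)
    have hXYv : X - Y = (nx - y1) • e1 + (-y2) • e2 := by
      rw [hX]; nth_rewrite 1 [hY]
      funext i; simp [sub_smul]; ring
    rw [transpose_add, transpose_smul, vmv_transpose, vmv_transpose]
    rw [Matrix.sub_mulVec, Matrix.sub_mulVec, Matrix.add_mulVec, Matrix.smul_mulVec,
      Matrix.smul_mulVec, Matrix.smul_mulVec, Matrix.one_mulVec,
      vmv_mulVec, vmv_mulVec, vmv_mulVec]
    rw [hXYv]
    simp only [dotProduct_add, dotProduct_smul, smul_eq_mul, h11, h12, h21, h22, h31, h32,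
      hu, add_dotProduct, smul_dotProduct]
    funext i
    simp [Pi.add_apply, Pi.smul_apply, Pi.sub_apply, smul_eq_mul]
    ring

lemma exists_cross_ne (X : Fin 3 → ℝ) (hX : X ≠ 0) : ∃ w : Fin 3 → ℝ, X ×₃ w ≠ 0 := by
  by_contra h
  push_neg at h
  have h0 := h (Pi.single 0 1)
  have h1 := h (Pi.single 1 1)
  rw [cross_apply] at h0 h1
  apply hX
  have e01 := congrFun h0 1
  have e02 := congrFun h0 2
  have e12 := congrFun h1 2
  simp [Pi.single_apply] at e01 e02 e12
  funext i
  fin_cases i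
  · simpa using e12
  · simpa using e02
  · simpa using e01

lemma cross_eq_zero_parallel (X Y : Fin 3 → ℝ) (h : X ×₃ Y = 0) :
    (X ⬝ᵥ X) • Y = (X ⬝ᵥ Y) • X := by
  have hL : (X ×₃ Y) ⬝ᵥ (X ×₃ Y) = (X ⬝ᵥ X) * (Y ⬝ᵥ Y) - (X ⬝ᵥ Y) * (Y ⬝ᵥ X) :=
    cross_dot_cross X Y X Y
  rw [h, zero_dotProduct] at hL
  have hD : ((X ⬝ᵥ X) • Y - (X ⬝ᵥ Y) • X) ⬝ᵥ ((X ⬝ᵥ X) • Y - (X ⬝ᵥ Y) • X) = 0 := by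
    simp only [sub_dotProduct, dotProduct_sub, smul_dotProduct, dotProduct_smul, smul_eq_mul]
    rw [dotProduct_comm Y X] at hL ⊢
    linear_combination (-(X ⬝ᵥ X)) * hL
  have := dotProduct_self_eq_zero.mp hD
  exact sub_eq_zero.mp this

lemma dot_self_pos (v : Fin 3 → ℝ) (hv : v ≠ 0) : 0 < v ⬝ᵥ v := by
  rcases lt_or_eq_of_le (Finset.sum_nonneg fun i _ => mul_self_nonneg (v i)) with h | h
  · exact h
  · exact absurd (dotProduct_self_eq_zero.mp h.symm) hv

theorem exists_coupling_matrix (x y : E3) (hx : x ≠ 0) (hy : y ≠ 0) :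
    ∃ A : M3,
      A * Aᵀ = amat0 y ∧
      Matrix.trace (sigmat0 x * Aᵀ) = ‖x‖ * ‖y‖ + (inner ℝ x y : ℝ) ∧
      Matrix.mulVec (sigmat0 x - Aᵀ) (fun i => (x - y) i) = 0 := by
  set X : Fin 3 → ℝ := fun i => x i with hXdef
  set Y : Fin 3 → ℝ := fun i => y i with hYdef
  have hXne : X ≠ 0 := by intro h; apply hx; ext i; exact congrFun h i
  have hXX : X ⬝ᵥ X = ‖x‖ ^ 2 := by
    rw [← real_inner_self_eq_norm_sq]
    simp [PiLp.inner_apply, dotProduct, hXdef, -real_inner_self_eq_norm_sq, -inner_self_eq_norm_sq_to_K]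
  have hYY : Y ⬝ᵥ Y = ‖y‖ ^ 2 := by
    rw [← real_inner_self_eq_norm_sq]
    simp [PiLp.inner_apply, dotProduct, hYdef, -real_inner_self_eq_norm_sq, -inner_self_eq_norm_sq_to_K]
  have hnx : (0 : ℝ) < ‖x‖ := norm_pos_iff.mpr hx
  have hnyp : (0 : ℝ) < ‖y‖ := norm_pos_iff.mpr hy
  -- pick a vector `Z` with `X ×₃ Z ≠ 0` and `Y ⬝ᵥ (X ×₃ Z) = 0`
  obtain ⟨w, hw⟩ := exists_cross_ne X hXne
  set Z : Fin 3 → ℝ := if X ×₃ Y = 0 then w else Y with hZdef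
  set c : Fin 3 → ℝ := X ×₃ Z with hcdef
  have hcne : c ≠ 0 := by
    by_cases hpar : X ×₃ Y = 0 <;> simp [hcdef, hZdef, hpar, hw]
  have hXc : X ⬝ᵥ c = 0 := dot_self_cross X Z
  have hYc : Y ⬝ᵥ c = 0 := by
    by_cases hpar : X ×₃ Y = 0
    · have hpl := cross_eq_zero_parallel X Y hpar
      have h1 : (X ⬝ᵥ X) * (Y ⬝ᵥ c) = (X ⬝ᵥ Y) * (X ⬝ᵥ c) := by
        have := congrArg (fun v => v ⬝ᵥ c) hpl
        simpa [smul_dotProduct, smul_eq_mul] using this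
      rw [hXc, mul_zero] at h1
      have hXX0 : X ⬝ᵥ X ≠ 0 := by rw [hXX]; positivity
      exact (mul_eq_zero.mp h1).resolve_left hXX0
    · have : Z = Y := by simp [hZdef, hpar]
      rw [hcdef, this]
      exact dot_cross_self X Y
  have hcc : 0 < c ⬝ᵥ c := dot_self_pos c hcne
  set m : ℝ := Real.sqrt (c ⬝ᵥ c) with hmdef
  have hm : 0 < m := Real.sqrt_pos.mpr hcc
  have hm2 : m ^ 2 = c ⬝ᵥ c := Real.sq_sqrt hcc.le
  -- the orthonormal basis
  set e1 : Fin 3 → ℝ := ‖x‖⁻¹ • X with he1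
  set e3 : Fin 3 → ℝ := m⁻¹ • c with he3
  set e2 : Fin 3 → ℝ := e3 ×₃ e1 with he2
  have h11 : e1 ⬝ᵥ e1 = 1 := by
    rw [he1, smul_dotProduct, dotProduct_smul, hXX, smul_eq_mul, smul_eq_mul]
    field_simp
  have h33 : e3 ⬝ᵥ e3 = 1 := by
    rw [he3, smul_dotProduct, dotProduct_smul, ← hm2, smul_eq_mul, smul_eq_mul]
    field_simp
  have h13 : e1 ⬝ᵥ e3 = 0 := by
    rw [he1, he3, smul_dotProduct, dotProduct_smul, hXc]
    simp
  have h31 : e3 ⬝ᵥ e1 = 0 := by rwa [dotProduct_comm]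
  have h12 : e1 ⬝ᵥ e2 = 0 := by rw [he2]; exact dot_cross_self e3 e1
  have h23 : e2 ⬝ᵥ e3 = 0 := by
    rw [dotProduct_comm, he2]; exact dot_self_cross e3 e1
  have h22 : e2 ⬝ᵥ e2 = 1 := by
    rw [he2, cross_dot_cross, h11, h33, h13, h31]
    ring
  have hC := complete3 e1 e2 e3 h11 h22 h33 h12 h13 h23
  have hXe : X = ‖x‖ • e1 := by
    rw [he1, smul_smul, mul_inv_cancel₀ (ne_of_gt hnx), one_smul]
  have hYe3 : Y ⬝ᵥ e3 = 0 := by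
    rw [he3, dotProduct_smul, hYc, smul_zero]
  have hYdec : Y = (Y ⬝ᵥ e1) • e1 + (Y ⬝ᵥ e2) • e2 := by
    have h1 := congrArg (fun M : M3 => Matrix.mulVec M Y) hC
    simp only [Matrix.add_mulVec, vmv_mulVec, Matrix.one_mulVec] at h1
    rw [dotProduct_comm e3 Y, hYe3, zero_smul, add_zero] at h1
    rw [dotProduct_comm Y e1, dotProduct_comm Y e2]
    exact h1.symm
  obtain ⟨A, ha, hb, hcv⟩ := core3 e1 e2 e3 X Y ‖x‖ ‖y‖ h11 h22 h33 h12 h13 h23 hC hXe hYdec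
    (by rw [hYY])
  -- rewrite `amat0` and `sigmat0`
  have hamat : amat0 y = ‖y‖ ^ 2 • (1 : M3) - vecMulVec Y Y := by
    rw [amat0, if_neg hy, proj3, smul_sub, smul_smul,
      mul_inv_cancel₀ (by positivity : (‖y‖ ^ 2 : ℝ) ≠ 0), one_smul]
  have hXXe : vecMulVec X X = (‖x‖ * ‖x‖) • vecMulVec e1 e1 := by
    rw [hXe]; ext a b
    simp only [vecMulVec_apply, Matrix.smul_apply, Pi.smul_apply, smul_eq_mul]
    ring
  have hsig : sigmat0 x = ‖x‖ • (1 : M3) - ‖x‖ • vecMulVec e1 e1 := by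
    have h0 : (‖x‖ : ℝ) ≠ 0 := hnx.ne'
    have hscal : ‖x‖ * (‖x‖ ^ 2)⁻¹ * (‖x‖ * ‖x‖) = ‖x‖ := by
      rw [← sq, mul_assoc, inv_mul_cancel₀ (pow_ne_zero 2 h0), mul_one]
    rw [sigmat0, if_neg hx, proj3, smul_sub, smul_smul, hXXe, smul_smul, hscal]
  have hinner : (inner ℝ x y : ℝ) = X ⬝ᵥ Y := by
    simp [PiLp.inner_apply, dotProduct, hXdef, hYdef]
    exact Finset.sum_congr rfl fun _ _ => mul_comm _ _
  refine ⟨A, ?_, ?_, ?_⟩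
  · rw [ha, hamat]
  · rw [hsig, hb, hinner]
  · have hfun : (fun i => (x - y) i) = X - Y := rfl
    rw [hsig, hfun, hcv]
end
end
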